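/- Let n ≥ 2 be an integer and let P be a real with 1/(n+1) < P ≤ 1. Define γ(P) = √(P/2 − 1/(2(n+1))) if 1/(n+1) < P ≤ (n+3)/(n+1)², and γ(P) = 1/(2n) + (1/2)·√((1 − 1/n)·(P − 1/n)) if (n+3)/(n+1)² ≤ P ≤ 1. Then the maximum of the linear function −1 + 2x_1 + ∑_{k=2}^n x_k over all x ∈ ℝ^n satisfying ∑_{k=1}^n x_k ≤ 1 and (1 − ∑_{k=1}^n x_k)² + ∑_{k=1}^n x_k² ≤ P is attained and equals 2·γ(P). -/

import Mathlib

/-- The optimal value parameter `γ(P)` for the `N`-qubit X-MEMS with respect to purity `P`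
(`n = 2^{N-1}`). -/
noncomputable def gammaP (n : ℕ) (P : ℝ) : ℝ :=
  if P ≤ ((n : ℝ) + 3) / ((n : ℝ) + 1) ^ 2 then
    Real.sqrt (P / 2 - 1 / (2 * ((n : ℝ) + 1)))
  else
    1 / (2 * (n : ℝ)) + (1 / 2) * Real.sqrt ((1 - 1 / (n : ℝ)) * (P - 1 / (n : ℝ)))

lemma aux_ub (N P a u : ℝ) (hN : 2 ≤ N) (hu : 0 ≤ u)
    (hc : (N-1)*a^2 + (1-a-u)^2 + (N-1)*u^2 ≤ (N-1)*P)
    (hP1 : 1/(N+1) < P) :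
    a - u ≤ 2 * (if P ≤ (N+3)/(N+1)^2 then Real.sqrt (P/2 - 1/(2*(N+1)))
      else 1/(2*N) + (1/2)*Real.sqrt ((1-1/N)*(P-1/N))) := by
  have hN0 : (0:ℝ) < N := by linarith
  have hN1 : (0:ℝ) < N - 1 := by linarith
  have hN2 : (0:ℝ) < N + 1 := by linarith
  have hP1' : 1 < P * (N+1) := by rwa [div_lt_iff₀ hN2] at hP1
  by_cases hreg : P ≤ (N+3)/(N+1)^2
  · rw [if_pos hreg]
    have harg : 0 ≤ P/2 - 1/(2*(N+1)) := by
      rw [sub_nonneg, div_le_div_iff₀ (by linarith) (by linarith)]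
      nlinarith
    have key : (a-u)^2 ≤ 2*P - 2/(N+1) := by
      have h2 : 2/(N+1) * ((N+1)*(N-1)) = 2*(N-1) := by field_simp
      nlinarith [sq_nonneg ((N+1)*(1-a-u) - (N-1)),
        mul_le_mul_of_nonneg_left hc (by linarith : (0:ℝ) ≤ 2*(N+1)),
        mul_pos hN2 hN1, h2]
    calc a - u ≤ |a - u| := le_abs_self _
      _ = Real.sqrt ((a-u)^2) := (Real.sqrt_sq_eq_abs _).symm
      _ ≤ Real.sqrt (2*P - 2/(N+1)) := Real.sqrt_le_sqrt key
      _ = 2 * Real.sqrt (P/2 - 1/(2*(N+1))) := by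
          rw [show 2*P - 2/(N+1) = 2^2 * (P/2 - 1/(2*(N+1))) by field_simp,
            Real.sqrt_mul (by norm_num), Real.sqrt_sq (by norm_num)]
  · rw [if_neg hreg]
    push_neg at hreg
    have hreg' : N + 3 < P * (N+1)^2 := by rwa [div_lt_iff₀ (by positivity)] at hreg
    have harg : 0 ≤ (1-1/N)*(P-1/N) := by
      apply mul_nonneg
      · rw [sub_nonneg, div_le_one hN0]; linarith
      · rw [sub_nonneg, div_le_iff₀ hN0]; nlinarith
    obtain ⟨s, hseq, hs0, hs2⟩ : ∃ s, Real.sqrt ((1-1/N)*(P-1/N)) = s ∧ 0 ≤ s ∧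
        s^2 = (1-1/N)*(P-1/N) := ⟨_, rfl, Real.sqrt_nonneg _, Real.sq_sqrt harg⟩
    rw [hseq]
    by_cases ha : 2/(N+1) ≤ a
    · have ha' : 0 ≤ (N+1)*a - 2 := by
        rw [div_le_iff₀ hN2] at ha; linarith [ha]
      have hq : N*(a-u)^2 - 2*(a-u) + 1 ≤ (N-1)*P := by
        nlinarith [mul_nonneg hu ha']
      have h2 : (a - u - 1/N)^2 ≤ (1-1/N)*(P-1/N) := by
        have e1 : (a-u-1/N)^2 = (N*(a-u)-1)^2 / N^2 := by field_simp
        have e2 : (1-1/N)*(P-1/N) = ((N-1)*(N*P-1)) / N^2 := by field_simp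
        rw [e1, e2, div_le_div_iff_of_pos_right (by positivity)]
        nlinarith [mul_le_mul_of_nonneg_left hq hN0.le]
      have hfin : a - u - 1/N ≤ s := by
        calc a - u - 1/N ≤ |a - u - 1/N| := le_abs_self _
          _ = Real.sqrt ((a-u-1/N)^2) := (Real.sqrt_sq_eq_abs _).symm
          _ ≤ s := by rw [← hseq]; exact Real.sqrt_le_sqrt h2
      have e0 : 2*(1/(2*N)) = 1/N := by field_simp
      linarith
    · push_neg at ha
      have hsge : (N-1)/(N*(N+1)) ≤ s := by
        rw [← hseq]
        apply (Real.le_sqrt (div_nonneg (by linarith) (by positivity)) harg).mpr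
        rw [show (1-1/N)*(P-1/N) = ((N-1)*(N*P-1)) / N^2 by field_simp]
        rw [div_pow, div_le_div_iff₀ (by positivity) (by positivity)]
        have key : 0 ≤ N^3*(N-1)*(P*(N+1)^2 - (N+3)) :=
          mul_nonneg (mul_nonneg (by positivity) (by linarith)) (by linarith)
        have expand : (N-1)*(N*P-1)*(N*(N+1))^2 - (N-1)^2*N^2
            = N^3*(N-1)*(P*(N+1)^2-(N+3)) := by ring
        linarith [key, expand]
      have e : 2/(N+1) = 1/N + (N-1)/(N*(N+1)) := by field_simp; ring
      have e0 : 2*(1/(2*N)) = 1/N := by field_simp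
      linarith

lemma sum_ite_univ (n : ℕ) (i0 : Fin n) (A B : ℝ) :
    ∑ k : Fin n, (if k = i0 then A else B) = A + ((n:ℝ) - 1) * B := by
  have h : ∀ k : Fin n, (if k = i0 then A else B) = (if k = i0 then A - B else 0) + B :=
    fun k => by split <;> ring
  simp only [h, Finset.sum_add_distrib, Finset.sum_ite_eq' Finset.univ i0 (fun _ => A - B),
    Finset.mem_univ, if_true, Finset.sum_const, Finset.card_univ, Fintype.card_fin,
    nsmul_eq_mul]
  ring

/-- The reduced (convex) form of the X-MEMS optimization with fixed purity `P`: for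
`1/(n+1) < P ≤ 1`, the maximum of `-1 + 2 x_1 + ∑_{k=2}^n x_k` over all `x ∈ ℝ^n` with
`∑_k x_k ≤ 1` and `(1 - ∑_k x_k)² + ∑_k x_k² ≤ P` is attained and equals `2 γ(P)`. -/
theorem xmems_reduced_sdp (n : ℕ) (hn : 2 ≤ n) (P : ℝ)
    (hP1 : 1 / ((n : ℝ) + 1) < P) (hP2 : P ≤ 1) :
    IsGreatest
      {v : ℝ | ∃ x : Fin n → ℝ,
        (∑ k, x k ≤ 1) ∧
        ((1 - ∑ k, x k) ^ 2 + ∑ k, (x k) ^ 2 ≤ P) ∧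
        v = -1 + 2 * x ⟨0, by omega⟩ +
          ∑ k ∈ Finset.univ.erase (⟨0, by omega⟩ : Fin n), x k}
      (2 * gammaP n P) := by
  set N : ℝ := (n : ℝ) with hNdef
  have hN : (2:ℝ) ≤ N := by rw [hNdef]; exact_mod_cast hn
  have hN0 : (0:ℝ) < N := by linarith
  have hN1 : (0:ℝ) < N - 1 := by linarith
  have hN2 : (0:ℝ) < N + 1 := by linarith
  have hN0' : N ≠ 0 := ne_of_gt hN0
  have hN1' : N - 1 ≠ 0 := ne_of_gt hN1
  have hN2' : N + 1 ≠ 0 := ne_of_gt hN2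
  have hP1' : 1 < P * (N+1) := by rwa [div_lt_iff₀ hN2] at hP1
  have hmem : (⟨0, by omega⟩ : Fin n) ∈ Finset.univ := Finset.mem_univ _
  have hgamma : gammaP n P = (if P ≤ (N+3)/(N+1)^2 then Real.sqrt (P/2 - 1/(2*(N+1)))
      else 1/(2*N) + (1/2)*Real.sqrt ((1-1/N)*(P-1/N))) := rfl
  constructor
  · -- membership: construct the optimizer
    by_cases hreg : P ≤ (N+3)/(N+1)^2
    · -- regime 1
      have harg : 0 ≤ P/2 - 1/(2*(N+1)) := by
        rw [sub_nonneg, div_le_div_iff₀ (by linarith) (by linarith)]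
        nlinarith
      obtain ⟨g, hgeq, hg0, hg2⟩ : ∃ g, Real.sqrt (P/2 - 1/(2*(N+1))) = g ∧ 0 ≤ g ∧
          g^2 = P/2 - 1/(2*(N+1)) := ⟨_, rfl, Real.sqrt_nonneg _, Real.sq_sqrt harg⟩
      have hreg2 : P * (N+1)^2 ≤ N + 3 := by rwa [le_div_iff₀ (by positivity)] at hreg
      have hgle : g ≤ 1/(N+1) := by
        rw [← hgeq, show (1:ℝ)/(N+1) = Real.sqrt ((1/(N+1))^2) from
          (Real.sqrt_sq (by positivity)).symm]
        apply Real.sqrt_le_sqrt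
        rw [show P/2 - 1/(2*(N+1)) = (P*(N+1)-1)/(2*(N+1)) by field_simp,
          div_pow, one_pow, div_le_div_iff₀ (by positivity) (by positivity)]
        nlinarith [mul_le_mul_of_nonneg_left hreg2 hN2.le]
      have hg2' : 2*g^2 = P - 1/(N+1) := by rw [hg2]; field_simp
      refine ⟨fun k => if k = (⟨0, by omega⟩ : Fin n) then 1/(N+1) + g else 1/(N+1),
        ?_, ?_, ?_⟩
      · rw [sum_ite_univ]
        have e : (1/(N+1) + g) + (N - 1) * (1/(N+1)) = 1 - 1/(N+1) + g := by
          field_simp; ring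
        rw [← hNdef, e]
        linarith
      · rw [sum_ite_univ]
        have esq : ∑ k : Fin n,
            (if k = (⟨0, by omega⟩ : Fin n) then 1/(N+1) + g else 1/(N+1))^2
            = (1/(N+1) + g)^2 + (N - 1) * (1/(N+1))^2 := by
          simp only [apply_ite (fun y : ℝ => y^2)]
          rw [sum_ite_univ, ← hNdef]
        rw [esq, ← hNdef]
        have e : (1 - ((1/(N+1) + g) + (N - 1) * (1/(N+1))))^2
            + ((1/(N+1) + g)^2 + (N - 1) * (1/(N+1))^2) = 1/(N+1) + 2*g^2 := by
          field_simp; ring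
        rw [e, hg2']
        linarith
      · rw [Finset.sum_erase_eq_sub hmem, sum_ite_univ, ← hNdef]
        simp only [eq_self_iff_true, if_true]
        rw [hgamma, if_pos hreg, hgeq]
        have ec : (N+1) * (1/(N+1)) = 1 := mul_one_div_cancel hN2'
        linear_combination -ec
    · -- regime 2
      push_neg at hreg
      have hreg' : N + 3 < P * (N+1)^2 := by rwa [div_lt_iff₀ (by positivity)] at hreg
      have harg : 0 ≤ (1-1/N)*(P-1/N) := by
        apply mul_nonneg
        · rw [sub_nonneg, div_le_one hN0]; linarith
        · rw [sub_nonneg, div_le_iff₀ hN0]; nlinarith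
      obtain ⟨s, hseq, hs0, hs2⟩ : ∃ s, Real.sqrt ((1-1/N)*(P-1/N)) = s ∧ 0 ≤ s ∧
          s^2 = (1-1/N)*(P-1/N) := ⟨_, rfl, Real.sqrt_nonneg _, Real.sq_sqrt harg⟩
      have hs2' : N^2 * s^2 = (N-1)*(N*P-1) := by rw [hs2]; field_simp
      refine ⟨fun k => if k = (⟨0, by omega⟩ : Fin n) then 1/N + s
        else (1 - (1/N + s))/(N - 1), ?_, ?_, ?_⟩
      · rw [sum_ite_univ, ← hNdef]
        have e : (1/N + s) + (N - 1) * ((1 - (1/N + s))/(N - 1)) = 1 := by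
          field_simp; ring
        rw [e]
      · rw [sum_ite_univ]
        have esq : ∑ k : Fin n,
            (if k = (⟨0, by omega⟩ : Fin n) then 1/N + s else (1 - (1/N + s))/(N - 1))^2
            = (1/N + s)^2 + (N - 1) * ((1 - (1/N + s))/(N - 1))^2 := by
          simp only [apply_ite (fun y : ℝ => y^2)]
          rw [sum_ite_univ, ← hNdef]
        rw [esq, ← hNdef]
        rw [← sub_nonneg]
        have e : P - ((1 - ((1/N + s) + (N - 1) * ((1 - (1/N + s))/(N - 1))))^2
            + ((1/N + s)^2 + (N - 1) * ((1 - (1/N + s))/(N - 1))^2))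
            = ((N-1)*(N*P-1) - N^2*s^2)/(N*(N-1)) := by
          field_simp
          ring
        rw [e, hs2', sub_self, zero_div]
      · rw [Finset.sum_erase_eq_sub hmem, sum_ite_univ, ← hNdef]
        simp only [eq_self_iff_true, if_true]
        rw [hgamma, if_neg (not_le.mpr hreg), hseq]
        have e1 : (N - 1) * ((1 - (1/N + s))/(N - 1)) = 1 - (1/N + s) := by
          field_simp
        rw [e1]
        ring
  · -- upper bound
    rintro v ⟨x, h1, h2, rfl⟩
    rw [Finset.sum_erase_eq_sub hmem]
    have hcard : (((Finset.univ.erase (⟨0, by omega⟩ : Fin n)).card : ℝ)) = N - 1 := by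
      rw [Finset.card_erase_of_mem hmem, Finset.card_univ, Fintype.card_fin]
      push_cast [Nat.cast_sub (by omega : 1 ≤ n)]
      ring
    have hCS := sq_sum_le_card_mul_sum_sq
      (s := Finset.univ.erase (⟨0, by omega⟩ : Fin n)) (f := x)
    rw [hcard, Finset.sum_erase_eq_sub hmem,
      Finset.sum_erase_eq_sub (f := fun k => (x k)^2) hmem] at hCS
    set S := ∑ k, x k with hS
    set Q := ∑ k, (x k)^2 with hQ
    set a := x (⟨0, by omega⟩ : Fin n) with ha
    have hu : 0 ≤ 1 - S := by linarith
    have hc : (N-1)*a^2 + (1-a-(1-S))^2 + (N-1)*(1-S)^2 ≤ (N-1)*P := by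
      nlinarith [hCS, mul_le_mul_of_nonneg_left h2 hN1.le]
    have := aux_ub N P a (1-S) hN hu hc hP1
    rw [hgamma]
    linarith
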